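/- Suppose A ⊆ B ⊆ P(ω₁) where A is the finite-cofinite algebra on ω₁, and suppose ω₁ is partitioned into disjoint countably infinite sets S_ξ (ξ < ω₁) such that every b ∈ B \ A meets some S_ξ and its complement also meets that same S_ξ. Then Irr_mm(B) = ℵ₁. -/

import Mathlib

open Cardinal Set

universe u
variable {B : Type u} [BooleanAlgebra B]

/-- Membership in the boolean subalgebra of `B` generated by `E`. -/
inductive InGen (E : Set B) : B → Prop
  | base {a : B} : a ∈ E → InGen E a
  | bot : InGen E ⊥
  | compl {a : B} : InGen E a → InGen E aᶜ
  | sup {a b : B} : InGen E a → InGen E b → InGen E (a ⊔ b)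

/-- `E` is irredundant. -/
def Irred (E : Set B) : Prop := ∀ a ∈ E, ¬ InGen (E \ {a}) a

/-- `E` is independent. -/
def Indep (E : Set B) : Prop :=
  ∀ F G : Finset B, ↑F ⊆ E → ↑G ⊆ E → Disjoint F G →
    F.inf id ⊓ G.inf (fun a => aᶜ) ≠ ⊥

/-- `S` is dense in `B`. -/
def DenseSub (S : Set B) : Prop := ∀ b : B, b ≠ ⊥ → ∃ d ∈ S, d ≠ ⊥ ∧ d ≤ b

/-- pi-weight of `B`: least size of a dense subset. -/
noncomputable def piWeight (B : Type u) [BooleanAlgebra B] : Cardinal :=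
  sInf {c | ∃ S : Set B, DenseSub S ∧ #S = c}

/-- `E` is a maximal irredundant subset of `B`. -/
def MaxIrred (E : Set B) : Prop :=
  Irred E ∧ ∀ b : B, b ∉ E → ¬ Irred (insert b E)

/-- least size of a maximal irredundant subset of `B`. -/
noncomputable def irrMM (B : Type u) [BooleanAlgebra B] : Cardinal :=
  sInf {c | ∃ E : Set B, MaxIrred E ∧ #E = c}


/-- A fixed set of size ℵ₁ with its canonical well-order: "ω₁". -/
noncomputable def W : Type := (Cardinal.aleph 1).ord.ToType

noncomputable instance : LinearOrder W := inferInstanceAs (LinearOrder (Cardinal.aleph 1).ord.ToType)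

/-- The finite-cofinite algebra on ω₁. -/
def finCofin : Set (Set W) := {b | b.Finite ∨ bᶜ.Finite}

/-- `S` is (the underlying set of) a subalgebra of `P(ω₁)`. -/
def IsSubalg (S : Set (Set W)) : Prop :=
  ∅ ∈ S ∧ (∀ a ∈ S, aᶜ ∈ S) ∧ ∀ a ∈ S, ∀ b ∈ S, a ∪ b ∈ S

/-- `E` is a maximal irredundant subset of the subalgebra (with carrier) `Bs`. -/
def MaxIrredIn (Bs E : Set (Set W)) : Prop :=
  E ⊆ Bs ∧ Irred E ∧ ∀ b ∈ Bs, b ∉ E → ¬ Irred (insert b E)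

/-- `Irr_mm` of a subalgebra of `P(ω₁)` with carrier `Bs`. -/
noncomputable def irrMMIn (Bs : Set (Set W)) : Cardinal :=
  sInf {c | ∃ E, MaxIrredIn Bs E ∧ #E = c}

/-- pi-weight of a subalgebra of `P(ω₁)` with carrier `Bs`. -/
noncomputable def piIn (Bs : Set (Set W)) : Cardinal :=
  sInf {c | ∃ S, S ⊆ Bs ∧ (∀ b ∈ Bs, b ≠ ∅ → ∃ d ∈ S, d ≠ ∅ ∧ d ⊆ b) ∧ #S = c}

/-- `C` is a closed unbounded subset of ω₁. -/
def IsClubW (C : Set W) : Prop :=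
  (∀ α : W, ∃ β ∈ C, α < β) ∧
    ∀ α : W, (C ∩ Set.Iio α).Nonempty → IsLUB (C ∩ Set.Iio α) α → α ∈ C

/-- `α` and `β` lie in the same `C`-block. -/
def SameBlock (C : Set W) (α β : W) : Prop := ∀ γ ∈ C, (γ ≤ α ↔ γ ≤ β)

/-- `C` is a nice club: all of its blocks are infinite. -/
def NiceClub (C : Set W) : Prop := IsClubW C ∧ ∀ α : W, {β | SameBlock C α β}.Infinite

/-- `b` is a union of `C`-blocks. -/
def BlockUnion (C : Set W) (b : Set W) : Prop :=
  ∀ α β : W, SameBlock C α β → (α ∈ b ↔ β ∈ b)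

/-- `b` is blockish for `C`: both `b` and its complement are unions of ℵ₁ many `C`-blocks. -/
def Blockish (C : Set W) (b : Set W) : Prop :=
  BlockUnion C b ∧ ¬ b.Countable ∧ ¬ bᶜ.Countable

/-- eventual domination: `f α ≤ g α` except on a set of size `< ℵ₁`. -/
def EvDom (f g : W → W) : Prop := {α | ¬ f α ≤ g α}.Countable

/-- the bounding number 𝔟_{ω₁}. -/
noncomputable def bW : Cardinal :=
  sInf {c | ∃ F : Set (W → W), (∀ g, ∃ f ∈ F, ¬ EvDom f g) ∧ #F = c}

/-- the dominating number 𝔡_{ω₁}. -/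
noncomputable def dW : Cardinal :=
  sInf {c | ∃ F : Set (W → W), (∀ g, ∃ f ∈ F, EvDom g f) ∧ #F = c}

/-- `T` splits `X`. -/
def Splits (T X : Set W) : Prop := ¬ (X ∩ T).Countable ∧ ¬ (X \ T).Countable

/-- the reaping number 𝔯_{ω₁}. -/
noncomputable def rW : Cardinal :=
  sInf {c | ∃ R : Set (Set W), (∀ X ∈ R, ¬ X.Countable) ∧
    (∀ T : Set W, ∃ X ∈ R, ¬ Splits T X) ∧ #R = c}

/-- the nice club `C` strongly splits `R`. -/
def StrSplits (C : Set W) (R : Set (Set W)) : Prop :=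
  ∀ b : Set W, Blockish C b → ∀ X ∈ R, Splits b X

/-- the strong reaping number r̂_{ω₁}. -/
noncomputable def rHatW : Cardinal :=
  sInf {c | ∃ R : Set (Set W), (∀ X ∈ R, ¬ X.Countable) ∧
    (∀ C : Set W, NiceClub C → ¬ StrSplits C R) ∧ #R = c}

/-- a subalgebra of `P(ω₁)` is dichotomous iff none of its members is countably infinite. -/
def Dichot (Bs : Set (Set W)) : Prop := ∀ b ∈ Bs, ¬ (b.Countable ∧ b.Infinite)


section Aux

variable {β : Type*} [BooleanAlgebra β]

lemma InGen.mono {E F : Set β} (h : E ⊆ F) {a : β} (ha : InGen E a) : InGen F a := by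
  induction ha with
  | base h' => exact InGen.base (h h')
  | bot => exact InGen.bot
  | compl _ ih => exact InGen.compl ih
  | sup _ _ ih1 ih2 => exact InGen.sup ih1 ih2

lemma InGen.inf' {E : Set β} {a b : β} (ha : InGen E a) (hb : InGen E b) :
    InGen E (a ⊓ b) := by
  have h : a ⊓ b = (aᶜ ⊔ bᶜ)ᶜ := by simp
  rw [h]; exact InGen.compl (InGen.sup ha.compl hb.compl)

lemma InGen.sdiff' {E : Set β} {a b : β} (ha : InGen E a) (hb : InGen E b) :
    InGen E (a \ b) := by
  rw [_root_.sdiff_eq]; exact ha.inf' hb.compl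

lemma inGen_mem_iff {α : Type*} {E : Set (Set α)} {x y : α}
    (h : ∀ g ∈ E, (x ∈ g ↔ y ∈ g)) {g : Set α} (hg : InGen E g) : (x ∈ g ↔ y ∈ g) := by
  induction hg with
  | base h' => exact h _ h'
  | bot => simp [Set.bot_eq_empty]
  | compl _ ih => simp only [Set.mem_compl_iff]; rw [ih]
  | sup _ _ ih1 ih2 => simp only [Set.sup_eq_union, Set.mem_union]; rw [ih1, ih2]

private def genLevel {α : Type*} (E : Set (Set α)) : ℕ → Set (Set α)
  | 0 => insert ⊥ E
  | n+1 => genLevel E n ∪ (compl '' genLevel E n ∪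
      Set.image2 (· ⊔ ·) (genLevel E n) (genLevel E n))

lemma inGen_countable {α : Type*} {E : Set (Set α)} (hE : E.Countable) :
    {g : Set α | InGen E g}.Countable := by
  have hCc : ∀ n, (genLevel E n).Countable := by
    intro n; induction n with
    | zero => exact hE.insert _
    | succ n ih => exact ih.union ((ih.image _).union (ih.image2 ih _))
  have hmono : ∀ {m n : ℕ}, m ≤ n → genLevel E m ⊆ genLevel E n := by
    intro m n h
    induction h with
    | refl => exact subset_rfl
    | step _ ih => exact ih.trans Set.subset_union_left
  have key : ∀ {g}, InGen E g → ∃ n, g ∈ genLevel E n := by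
    intro g hg
    induction hg with
    | base h => exact ⟨0, Set.mem_insert_of_mem _ h⟩
    | bot => exact ⟨0, Set.mem_insert _ _⟩
    | compl _ ih =>
        obtain ⟨n, hn⟩ := ih
        exact ⟨n+1, Set.mem_union_right _ (Set.mem_union_left _ ⟨_, hn, rfl⟩)⟩
    | sup _ _ ih1 ih2 =>
        obtain ⟨n, hn⟩ := ih1
        obtain ⟨m, hm⟩ := ih2
        exact ⟨max n m + 1, Set.mem_union_right _ (Set.mem_union_right _
          (Set.mem_image2_of_mem (hmono (le_max_left n m) hn)
            (hmono (le_max_right n m) hm)))⟩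
  exact (Set.countable_iUnion hCc).mono fun g hg => Set.mem_iUnion.2 (key hg)

lemma inGen_insert_singleton {α : Type*} {F : Set (Set α)} {p : α} {g : Set α}
    (hg : InGen (insert ({p} : Set α) F) g) :
    ∃ g', InGen F g' ∧ ∀ x, x ≠ p → (x ∈ g ↔ x ∈ g') := by
  induction hg with
  | base h =>
      rcases h with h | h
      · subst h
        exact ⟨⊥, InGen.bot, fun x hx => by
          simp [Set.bot_eq_empty, Set.mem_singleton_iff, hx]⟩
      · exact ⟨_, InGen.base h, fun x _ => Iff.rfl⟩
  | bot => exact ⟨⊥, InGen.bot, fun _ _ => Iff.rfl⟩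
  | compl _ ih =>
      obtain ⟨g', h1, h2⟩ := ih
      exact ⟨g'ᶜ, h1.compl, fun x hx => by
        simp only [Set.mem_compl_iff]; rw [h2 x hx]⟩
  | sup _ _ ih1 ih2 =>
      obtain ⟨g1, h11, h12⟩ := ih1
      obtain ⟨g2, h21, h22⟩ := ih2
      exact ⟨g1 ⊔ g2, h11.sup h21, fun x hx => by
        simp only [Set.sup_eq_union, Set.mem_union]; rw [h12 x hx, h22 x hx]⟩

end Aux

theorem irrMM_of_splitting_partition (Bs : Set (Set W))
    (hsub : IsSubalg Bs) (hA : finCofin ⊆ Bs)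
    (S : W → Set W) (hdisj : Pairwise (Function.onFun Disjoint S))
    (hcount : ∀ ξ : W, (S ξ).Countable ∧ (S ξ).Infinite)
    (hcover : (⋃ ξ : W, S ξ) = Set.univ)
    (hsplit : ∀ b ∈ Bs, b ∉ finCofin →
      ∃ ξ : W, (S ξ ∩ b).Nonempty ∧ (S ξ \ b).Nonempty) :
    irrMMIn Bs = Cardinal.aleph 1 := by
  classical
  -- cardinality of W
  have hWcard : #W = Cardinal.aleph 1 := Cardinal.mk_ord_toType _
  -- enumerations of the blocks
  have henum : ∀ ξ : W, ∃ e : ℕ → W, Function.Injective e ∧ Set.range e = S ξ := by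
    intro ξ
    have h1 : Countable (S ξ) := (hcount ξ).1.to_subtype
    have h2 : Infinite (S ξ) := (hcount ξ).2.to_subtype
    obtain ⟨f⟩ : Nonempty (ℕ ≃ S ξ) := nonempty_equiv_of_countable
    refine ⟨fun n => (f n : W), fun a b h => f.injective (Subtype.ext h), ?_⟩
    ext x
    constructor
    · rintro ⟨n, rfl⟩; exact (f n).2
    · intro hx; exact ⟨f.symm ⟨x, hx⟩, by simp⟩
  choose e he1 he2 using henum
  have heS : ∀ ξ i, e ξ i ∈ S ξ := fun ξ i => (he2 ξ) ▸ Set.mem_range_self i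
  have hblock : ∀ {ξ ζ : W} (i : ℕ), ξ ≠ ζ → e ξ i ∉ S ζ := by
    intro ξ ζ i hne hmem
    exact Set.disjoint_left.1 (hdisj hne) (heS ξ i) hmem
  -- the family
  set aS : W × ℕ → Set W := fun p => e p.1 '' Set.Iic p.2 with haS
  have haSfin : ∀ p, (aS p).Finite := fun p => (Set.finite_Iic p.2).image _
  have haSsub : ∀ p, aS p ⊆ S p.1 := by
    rintro p x ⟨i, _, rfl⟩; exact heS p.1 i
  have hxmem : ∀ ξ n (x : W), x ∈ aS (ξ, n) ↔ ∃ i, i ≤ n ∧ e ξ i = x := by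
    intro ξ n x
    constructor
    · rintro ⟨i, hi, rfl⟩; exact ⟨i, Set.mem_Iic.1 hi, rfl⟩
    · rintro ⟨i, hi, rfl⟩; exact ⟨i, Set.mem_Iic.2 hi, rfl⟩
  have hmem : ∀ ξ i n, e ξ i ∈ aS (ξ, n) ↔ i ≤ n := by
    intro ξ i n
    rw [hxmem]
    constructor
    · rintro ⟨j, hj, hji⟩
      exact he1 ξ hji ▸ hj
    · intro h; exact ⟨i, h, rfl⟩
  have haSinj : Function.Injective aS := by
    rintro ⟨ξ, n⟩ ⟨ζ, m⟩ h
    have hξζ : ξ = ζ := by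
      by_contra hne
      have h0 : e ξ 0 ∈ aS (ξ, n) := (hmem ξ 0 n).2 (Nat.zero_le n)
      rw [h] at h0
      exact hblock 0 hne (haSsub (ζ, m) h0)
    subst hξζ
    have h1 : n ≤ m := (hmem ξ n m).1 (h ▸ (hmem ξ n n).2 le_rfl)
    have h2 : m ≤ n := (hmem ξ m n).1 (h.symm ▸ (hmem ξ m m).2 le_rfl)
    simp [le_antisymm h1 h2]
  set E : Set (Set W) := Set.range aS with hE
  have hEsub : E ⊆ Bs := by
    rintro s ⟨p, rfl⟩
    exact hA (Or.inl (haSfin p))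
  -- singleton identities
  have hzero : ∀ ξ, aS (ξ, 0) = ({e ξ 0} : Set W) := by
    intro ξ; ext x
    rw [hxmem]
    simp only [Set.mem_singleton_iff]
    constructor
    · rintro ⟨j, hj, rfl⟩
      have : j = 0 := Nat.le_zero.1 hj
      rw [this]
    · rintro rfl; exact ⟨0, le_rfl, rfl⟩
  have hsucc : ∀ ξ k, ({e ξ (k+1)} : Set W) = aS (ξ, k+1) \ aS (ξ, k) := by
    intro ξ k; ext x
    simp only [Set.mem_singleton_iff, Set.mem_diff]
    constructor
    · rintro rfl
      refine ⟨(hmem ξ (k+1) (k+1)).2 le_rfl, fun hx => ?_⟩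
      have := (hmem ξ (k+1) k).1 hx; omega
    · rw [hxmem]
      rintro ⟨⟨j, hj, rfl⟩, hx⟩
      have : j = k + 1 := by
        by_contra hne
        exact hx ((hxmem ξ k _).2 ⟨j, by omega, rfl⟩)
      rw [this]
  have hsingGen : ∀ x : W, InGen E ({x} : Set W) := by
    intro x
    have hx : x ∈ ⋃ ξ : W, S ξ := hcover ▸ Set.mem_univ x
    obtain ⟨ξ, hξ⟩ := Set.mem_iUnion.1 hx
    obtain ⟨i, rfl⟩ : ∃ i, e ξ i = x := by rw [← he2 ξ] at hξ; exact hξ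
    cases i with
    | zero =>
        have h := InGen.base (show aS (ξ, 0) ∈ E from ⟨(ξ, 0), rfl⟩)
        rwa [hzero ξ] at h
    | succ k =>
        rw [hsucc ξ k]
        exact (InGen.base (show aS (ξ, k+1) ∈ E from ⟨(ξ, k+1), rfl⟩)).sdiff'
          (InGen.base (show aS (ξ, k) ∈ E from ⟨(ξ, k), rfl⟩))
  have hfinGen : ∀ b : Set W, b.Finite → InGen E b := by
    intro b hb
    refine Set.Finite.induction_on (motive := fun s _ => InGen E s) b hb InGen.bot ?_
    intro a s _ _ ih
    exact (hsingGen a).sup ih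
  have hAGen : ∀ b ∈ finCofin, InGen E b := by
    rintro b (hb | hb)
    · exact hfinGen b hb
    · have h := (hfinGen bᶜ hb).compl
      rwa [compl_compl] at h
  -- irredundance
  have hirr : Irred E := by
    rintro a ⟨⟨ξ, n⟩, rfl⟩ hInG
    have hinv : e ξ n ∈ aS (ξ, n) ↔ e ξ (n+1) ∈ aS (ξ, n) := by
      refine inGen_mem_iff ?_ hInG
      rintro g ⟨⟨⟨ζ, m⟩, rfl⟩, hne⟩
      have hne' : (ζ, m) ≠ (ξ, n) := fun h => hne (by rw [h]; rfl)
      by_cases hzx : ζ = ξ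
      · subst hzx
        have hmn : m ≠ n := fun h => hne' (by rw [h])
        rw [hmem, hmem]; omega
      · exact iff_of_false (fun h => hblock n (Ne.symm hzx) (haSsub (ζ, m) h))
          (fun h => hblock (n+1) (Ne.symm hzx) (haSsub (ζ, m) h))
    have h1 : e ξ n ∈ aS (ξ, n) := (hmem ξ n n).2 le_rfl
    have h2 : ¬ e ξ (n+1) ∈ aS (ξ, n) := fun h => by
      have := (hmem ξ (n+1) n).1 h; omega
    exact h2 (hinv.1 h1)
  -- maximality
  have hmax : ∀ b ∈ Bs, b ∉ E → ¬ Irred (insert b E) := by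
    intro b hbB hbE hIrr
    by_cases hbA : b ∈ finCofin
    · refine hIrr b (Set.mem_insert _ _) ?_
      rw [Set.insert_diff_self_of_notMem hbE]
      exact hAGen b hbA
    · obtain ⟨ξ, ⟨p, hpS, hpb⟩, ⟨q, hqS, hqb⟩⟩ := hsplit b hbB hbA
      obtain ⟨i, rfl⟩ : ∃ i, e ξ i = p := by rw [← he2 ξ] at hpS; exact hpS
      obtain ⟨j, rfl⟩ : ∃ j, e ξ j = q := by rw [← he2 ξ] at hqS; exact hqS
      have hflip : ∃ k, ¬ (e ξ k ∈ b ↔ e ξ (k+1) ∈ b) := by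
        by_contra hc
        push_neg at hc
        have hconst : ∀ n, e ξ n ∈ b ↔ e ξ 0 ∈ b := by
          intro n
          induction n with
          | zero => exact Iff.rfl
          | succ n ih => exact (hc n).symm.trans ih
        exact hqb (((hconst j).trans (hconst i).symm).2 hpb)
      obtain ⟨k, hk⟩ := hflip
      have hba : b ≠ aS (ξ, k) := fun h => hbA (Or.inl (h ▸ haSfin (ξ, k)))
      set F : Set (Set W) := insert b E \ {aS (ξ, k)} with hF
      have hbF : b ∈ F := ⟨Set.mem_insert _ _, fun h => hba h⟩
      have hEF : ∀ ζ m, (ζ, m) ≠ (ξ, k) → aS (ζ, m) ∈ F := by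
        intro ζ m hne
        exact ⟨Set.mem_insert_of_mem _ ⟨(ζ, m), rfl⟩,
          fun h => hne (haSinj h)⟩
      have hpair : InGen F ({e ξ k, e ξ (k+1)} : Set W) := by
        cases k with
        | zero =>
            have hpe : ({e ξ 0, e ξ 1} : Set W) = aS (ξ, 1) := by
              ext x
              simp only [Set.mem_insert_iff, Set.mem_singleton_iff]
              constructor
              · rintro (rfl | rfl)
                · exact (hxmem ξ 1 _).2 ⟨0, by omega, rfl⟩
                · exact (hxmem ξ 1 _).2 ⟨1, le_rfl, rfl⟩
              · rw [hxmem]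
                rintro ⟨jj, hj, rfl⟩
                interval_cases jj
                · exact Or.inl rfl
                · exact Or.inr rfl
            rw [hpe]
            exact InGen.base (hEF ξ 1 (by simp))
        | succ m =>
            have hpe : ({e ξ (m+1), e ξ (m+2)} : Set W) = aS (ξ, m+2) \ aS (ξ, m) := by
              ext x
              simp only [Set.mem_insert_iff, Set.mem_singleton_iff, Set.mem_diff]
              constructor
              · rintro (rfl | rfl)
                · refine ⟨(hmem ξ (m+1) (m+2)).2 (by omega), fun hx => ?_⟩
                  have := (hmem ξ (m+1) m).1 hx; omega
                · refine ⟨(hmem ξ (m+2) (m+2)).2 le_rfl, fun hx => ?_⟩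
                  have := (hmem ξ (m+2) m).1 hx; omega
              · rw [hxmem]
                rintro ⟨⟨jj, hj, rfl⟩, hx⟩
                have hj2 : ¬ jj ≤ m := fun h => hx ((hxmem ξ m _).2 ⟨jj, h, rfl⟩)
                have : jj = m + 1 ∨ jj = m + 2 := by omega
                rcases this with rfl | rfl
                · exact Or.inl rfl
                · exact Or.inr rfl
            rw [hpe]
            exact (InGen.base (hEF ξ (m+2) (by simp))).sdiff'
              (InGen.base (hEF ξ m (by simp)))
      have hsing : InGen F ({e ξ k} : Set W) := by
        by_cases hPk : e ξ k ∈ b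
        · have hPk1 : e ξ (k+1) ∉ b := fun h => hk ⟨fun _ => h, fun _ => hPk⟩
          have heq : ({e ξ k} : Set W) = ({e ξ k, e ξ (k+1)} : Set W) ⊓ b := by
            ext x
            simp only [Set.inf_eq_inter, Set.mem_inter_iff, Set.mem_insert_iff,
              Set.mem_singleton_iff]
            constructor
            · rintro rfl; exact ⟨Or.inl rfl, hPk⟩
            · rintro ⟨(rfl | rfl), hxb⟩
              · rfl
              · exact absurd hxb hPk1
          rw [heq]
          exact hpair.inf' (InGen.base hbF)
        · have hPk1 : e ξ (k+1) ∈ b := by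
            by_contra h
            exact hk ⟨fun h' => absurd h' hPk, fun h' => absurd h' h⟩
          have heq : ({e ξ k} : Set W) = ({e ξ k, e ξ (k+1)} : Set W) \ b := by
            ext x
            simp only [Set.mem_diff, Set.mem_insert_iff, Set.mem_singleton_iff]
            constructor
            · rintro rfl; exact ⟨Or.inl rfl, hPk⟩
            · rintro ⟨(rfl | rfl), hxb⟩
              · rfl
              · exact absurd hPk1 hxb
          rw [heq]
          exact hpair.sdiff' (InGen.base hbF)
      have haG : InGen F (aS (ξ, k)) := by
        cases k with
        | zero => rw [hzero ξ]; exact hsing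
        | succ m =>
            have heq : aS (ξ, m+1) = aS (ξ, m) ⊔ ({e ξ (m+1)} : Set W) := by
              ext x
              simp only [Set.sup_eq_union, Set.mem_union, Set.mem_singleton_iff]
              rw [hxmem, hxmem]
              constructor
              · rintro ⟨jj, hj, rfl⟩
                rcases Nat.lt_or_ge jj (m+1) with h | h
                · exact Or.inl ⟨jj, by omega, rfl⟩
                · have : jj = m + 1 := by omega
                  exact Or.inr (by rw [this])
              · rintro (⟨jj, hj, rfl⟩ | rfl)
                · exact ⟨jj, by omega, rfl⟩
                · exact ⟨m+1, le_rfl, rfl⟩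
            rw [heq]
            exact (InGen.base (hEF ξ m (by simp))).sup hsing
      exact hIrr (aS (ξ, k)) (Set.mem_insert_of_mem _ ⟨(ξ, k), rfl⟩) haG
  -- cardinality of E
  have hEcard : #E = Cardinal.aleph 1 := by
    rw [hE, Cardinal.mk_range_eq _ haSinj, Cardinal.mk_prod, Cardinal.mk_nat,
      Cardinal.lift_id, Cardinal.lift_id, hWcard,
      Cardinal.mul_eq_max (Cardinal.aleph0_le_aleph 1) le_rfl]
    exact max_eq_left (Cardinal.aleph0_le_aleph 1)
  -- lower bound: every maximal irredundant family is uncountable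
  have hlow : ∀ Eo : Set (Set W), MaxIrredIn Bs Eo → ¬ Eo.Countable := by
    rintro Eo ⟨hEoB, hEoIrr, hEoMax⟩ hcnt
    have hGc : {g : Set W | InGen Eo g}.Countable := inGen_countable hcnt
    have hPc : {p : W | InGen Eo ({p} : Set W)}.Countable :=
      hGc.preimage (f := fun p : W => ({p} : Set W)) Set.singleton_injective
    have hWu : ¬ (Set.univ : Set W).Countable := by
      rw [Set.countable_univ_iff]
      intro h
      have h1 : #W ≤ Cardinal.aleph0 := Cardinal.mk_le_aleph0_iff.2 h
      rw [hWcard] at h1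
      exact absurd h1 (not_le.2 Cardinal.aleph0_lt_aleph_one)
    obtain ⟨p, hp⟩ : ∃ p : W, ¬ InGen Eo ({p} : Set W) := by
      by_contra h
      push_neg at h
      exact hWu (hPc.mono fun x _ => h x)
    have hbB : ({p} : Set W) ∈ Bs := hA (Or.inl (Set.finite_singleton p))
    have hbE : ({p} : Set W) ∉ Eo := fun h => hp (InGen.base h)
    have hni := hEoMax _ hbB hbE
    rw [Irred] at hni
    push_neg at hni
    obtain ⟨a, haMem, haGen⟩ := hni
    rcases haMem with rfl | haE
    · rw [Set.insert_diff_self_of_notMem hbE] at haGen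
      exact hp haGen
    · have hne : ({p} : Set W) ∉ ({a} : Set (Set W)) := by
        simp only [Set.mem_singleton_iff]
        rintro rfl
        exact hbE haE
      rw [Set.insert_diff_of_notMem _ hne] at haGen
      obtain ⟨d, hd, hagree⟩ := inGen_insert_singleton haGen
      by_cases hpd : p ∈ a ↔ p ∈ d
      · have had : a = d := by
          ext x
          by_cases hx : x = p
          · subst hx; exact hpd
          · exact hagree x hx
        exact hEoIrr a haE (had ▸ hd)
      · have hdEo : InGen Eo d := hd.mono Set.diff_subset
        have haEo : InGen Eo a := InGen.base haE
        by_cases hpa : p ∈ a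
        · have hpdn : p ∉ d := fun h => hpd ⟨fun _ => h, fun _ => hpa⟩
          have heq : ({p} : Set W) = a \ d := by
            ext x
            simp only [Set.mem_singleton_iff, Set.mem_diff]
            constructor
            · rintro rfl; exact ⟨hpa, hpdn⟩
            · rintro ⟨hxa, hxd⟩
              by_contra hx
              exact hxd ((hagree x hx).1 hxa)
          exact hp (heq ▸ haEo.sdiff' hdEo)
        · have hpdy : p ∈ d := by
            by_contra h
            exact hpd ⟨fun h' => absurd h' hpa, fun h' => absurd h' h⟩
          have heq : ({p} : Set W) = d \ a := by
            ext x
            simp only [Set.mem_singleton_iff, Set.mem_diff]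
            constructor
            · rintro rfl; exact ⟨hpdy, hpa⟩
            · rintro ⟨hxd, hxa⟩
              by_contra hx
              exact hxa ((hagree x hx).2 hxd)
          exact hp (heq ▸ hdEo.sdiff' haEo)
  -- conclusion
  have hmemSet : Cardinal.aleph 1 ∈ {c | ∃ E', MaxIrredIn Bs E' ∧ #E' = c} :=
    ⟨E, ⟨hEsub, hirr, hmax⟩, hEcard⟩
  refine le_antisymm (csInf_le' hmemSet) (le_csInf ⟨_, hmemSet⟩ ?_)
  rintro c ⟨Eo, hEo, rfl⟩
  have huncnt := hlow Eo hEo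
  rw [← Cardinal.succ_aleph0, Order.succ_le_iff]
  by_contra h
  rw [not_lt] at h
  exact huncnt (Set.countable_coe_iff.1 (Cardinal.mk_le_aleph0_iff.1 h))
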